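/- Let X be a type of variables and V, V' types of values. Let p be a propagator on V'-domains (contracting and monotonic) and let φ be a view from V to V'. Then the derived propagator φ̂(p) = φ⁻ ∘ p ∘ φ is itself a propagator: it is contracting (φ̂(p) d x ⊆ d x for every domain d and every x) and monotonic (if d' x ⊆ d x for all x, then φ̂(p) d' x ⊆ φ̂(p) d x for all x). -/

import Mathlib

/-- The derived propagator `φ⁻ ∘ p ∘ φ` is contracting and monotonic. -/
theorem derived_is_propagator {X V V' : Type*}
    (p : (X → Set V') → (X → Set V'))
    (hcontr : ∀ d x, p d x ⊆ d x)
    (hmono : ∀ d' d : X → Set V', (∀ x, d' x ⊆ d x) → ∀ x, p d' x ⊆ p d x)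
    (φ : X → V → V') (hφ : ∀ x, Function.Injective (φ x)) :
    (∀ (d : X → Set V) (x : X),
        (φ x) ⁻¹' (p (fun y => φ y '' d y) x) ⊆ d x) ∧
    (∀ d' d : X → Set V, (∀ x, d' x ⊆ d x) → ∀ x,
        (φ x) ⁻¹' (p (fun y => φ y '' d' y) x) ⊆
        (φ x) ⁻¹' (p (fun y => φ y '' d y) x)) := by
  constructor
  · intro d x v hv
    have := hcontr (fun y => φ y '' d y) x hv
    obtain ⟨w, hw, hwv⟩ := this
    rwa [hφ x hwv] at hw
  · intro d' d h x v hv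
    exact hmono _ _ (fun y => Set.image_mono (h y)) x hv
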